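/- (Machine-learning based automated mechanism design.) Fix λ ∈ [0, 1] and define the blended objective μ_λ(M) = (1−λ)·R(M) + λ·W(M). Consider n agents with finite type sets T_1, …, T_n and independent uniform type distributions f_i on T_i, a finite outcome set O, and valuations v_i. Let V ∈ ℝ and ε ≥ 0. If M is an ε-EEIC and interim IR mechanism with μ_λ(M) ≥ V − ε, then there exists a BIC and interim IR mechanism M' with μ_λ(M') ≥ V − (1−λ)·(∑_{i=1}^n |T_i|)·ε − ε. -/

import Mathlib

open Finset

namespace Stmt18

variable {n : ℕ} {T : Fin n → Type} {O : Type}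

/-- The interim utility `U_i(s, s')` of agent `i` with true type `s` reporting `s'`. -/
noncomputable def interimU [∀ i, Fintype (T i)] [Fintype O]
    (f : ∀ i, T i → ℝ) (v : (i : Fin n) → T i → O → ℝ)
    (x : (∀ i, T i) → O → ℝ) (p : Fin n → (∀ i, T i) → ℝ)
    (i : Fin n) (s s' : T i) : ℝ :=
  (∑ o, (∑ t : ∀ j, T j, (∏ j, f j (t j)) * x (Function.update t i s') o) * v i s o)
    - ∑ t : ∀ j, T j, (∏ j, f j (t j)) * p i (Function.update t i s')

/-- Ex-post utility `u_i(s, M(t̂))` of agent `i` with true type `s` at report profile `th`. -/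
noncomputable def expostU [Fintype O]
    (v : (i : Fin n) → T i → O → ℝ)
    (x : (∀ i, T i) → O → ℝ) (p : Fin n → (∀ i, T i) → ℝ)
    (i : Fin n) (s : T i) (th : ∀ j, T j) : ℝ :=
  (∑ o, x th o * v i s o) - p i th

/-- Expected revenue `R(M)`. -/
noncomputable def Rev [∀ i, Fintype (T i)]
    (f : ∀ i, T i → ℝ) (p : Fin n → (∀ i, T i) → ℝ) : ℝ :=
  ∑ t : ∀ j, T j, (∏ j, f j (t j)) * ∑ i, p i t

/-- Expected social welfare `W(M)`. -/
noncomputable def Wel [∀ i, Fintype (T i)] [Fintype O]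
    (f : ∀ i, T i → ℝ) (v : (i : Fin n) → T i → O → ℝ)
    (x : (∀ i, T i) → O → ℝ) : ℝ :=
  ∑ t : ∀ j, T j, (∏ j, f j (t j)) * ∑ i, ∑ o, x t o * v i (t i) o

end Stmt18

set_option linter.unusedSectionVars false
set_option maxHeartbeats 1000000

namespace Stmt18Proof


variable {S : Type} [DecidableEq S]

/-- Sum of `d` along consecutive pairs of a list. -/
def chainSum (d : S → S → ℝ) : List S → ℝ
  | [] => 0
  | [_] => 0
  | a :: b :: l => d a b + chainSum d (b :: l)

lemma chainSum_cons_cons (d : S → S → ℝ) (a b : S) (l : List S) :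
    chainSum d (a :: b :: l) = d a b + chainSum d (b :: l) := rfl

lemma chainSum_append_cons (d : S → S → ℝ) (a : S) (l₂ : List S) :
    ∀ l₁ : List S, l₁ ≠ [] →
      chainSum d (l₁ ++ a :: l₂) = chainSum d (l₁ ++ [a]) + chainSum d (a :: l₂)
  | [], h => absurd rfl h
  | [x], _ => by simp [chainSum]
  | x :: y :: t, _ => by
    have ih := chainSum_append_cons d a l₂ (y :: t) (by simp)
    simp only [List.cons_append, chainSum_cons_cons] at *
    rw [ih]; ring

lemma chainSum_concat (d : S → S → ℝ) (a : S) :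
    ∀ (l : List S) (h : l ≠ []), chainSum d (l ++ [a]) = chainSum d l + d (l.getLast h) a
  | [], h => absurd rfl h
  | [x], _ => by simp [chainSum]
  | x :: y :: t, _ => by
    have ih := chainSum_concat d a (y :: t) (by simp)
    simp only [List.cons_append, chainSum_cons_cons] at *
    rw [ih, List.getLast_cons (by simp : (y :: t) ≠ [])]
    ring

lemma chainSum_of_chain' (d : S → S → ℝ) (ρ : S → S) :
    ∀ l : List S, List.Chain' (fun x z => ρ x = z) l →
      chainSum d l = (l.dropLast.map (fun x => d x (ρ x))).sum
  | [], _ => by simp [chainSum]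
  | [x], _ => by simp [chainSum]
  | x :: y :: t, h => by
    obtain ⟨hxy, ht⟩ := List.isChain_cons_cons.mp h
    have ih := chainSum_of_chain' d ρ (y :: t) ht
    simp only [chainSum_cons_cons, ih, List.dropLast_cons₂, List.map_cons, List.sum_cons, hxy]

/-- The cycle inequality. -/
lemma cycle_nonpos [Fintype S] (w : S → S → ℝ)
    (hcyc : ∀ ρ : Equiv.Perm S, ∑ s, w s (ρ s) ≤ ∑ s, w s s)
    (a : S) (l : List S) (hnd : (a :: l).Nodup) :
    chainSum (fun s t => w s t - w t t) ((a :: l) ++ [a]) ≤ 0 := by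
  classical
  set cc : List S := a :: l with hcc
  set ρ : Equiv.Perm S := cc.formPerm with hρ
  have hchain : List.Chain' (fun x z => ρ x = z) (cc ++ [a]) := by
    refine List.isChain_iff_getElem.mpr ?_
    intro i hi
    have hilt : i < cc.length := by
      simpa [List.length_append] using hi
    have hget1 : (cc ++ [a])[i]'(by simp [List.length_append]; omega) = (cc[i]'hilt) :=
      List.getElem_append_left hilt
    have hform : ρ ((cc[i]'hilt)) = cc[(i + 1) % cc.length]'(Nat.mod_lt _ (i.zero_le.trans_lt hilt)) :=
      List.formPerm_apply_getElem cc hnd i hilt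
    rw [hget1, hform]
    by_cases h2 : i + 1 < cc.length
    · have hmod : (i + 1) % cc.length = i + 1 := Nat.mod_eq_of_lt h2
      have : (cc ++ [a])[i+1]'(by simp [List.length_append]; omega) = (cc[i+1]'h2) :=
        List.getElem_append_left h2
      rw [this]
      congr 1
    · have hieq : i + 1 = cc.length := by omega
      have hgl : (cc ++ [a])[i+1]'(by simp [List.length_append]; omega) = a := by
        rw [List.getElem_append_right (by omega)]
        simp [hieq]
      rw [hgl]
      have h0 : (i + 1) % cc.length = 0 := by rw [hieq, Nat.mod_self]
      have : cc[(i + 1) % cc.length]'(Nat.mod_lt _ (i.zero_le.trans_lt hilt)) = cc[0]'(by simp [hcc]) := by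
        congr 1
      rw [this]
      simp [hcc]
  have h1 : chainSum (fun s t => w s t - w t t) (cc ++ [a])
      = ((cc.map (fun x => w x (ρ x) - w (ρ x) (ρ x)))).sum := by
    rw [chainSum_of_chain' _ ρ _ hchain]
    congr 1
    rw [List.dropLast_concat]
  have h2 : ((cc.map (fun x => w x (ρ x) - w (ρ x) (ρ x)))).sum
      = ∑ s ∈ cc.toFinset, (w s (ρ s) - w (ρ s) (ρ s)) :=
    (List.sum_toFinset _ hnd).symm
  have h3 : ∑ s ∈ cc.toFinset, (w s (ρ s) - w (ρ s) (ρ s))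
      = ∑ s, (w s (ρ s) - w (ρ s) (ρ s)) := by
    refine Finset.sum_subset (Finset.subset_univ _) ?_
    intro s _ hs
    have : ρ s = s := List.formPerm_apply_of_notMem (by simpa using hs)
    simp [this]
  have h4 : ∑ s, w (ρ s) (ρ s) = ∑ s, w s s := Equiv.sum_comp ρ (fun s => w s s)
  have h5 := hcyc ρ
  rw [h1, h2, h3, Finset.sum_sub_distrib, h4]
  linarith

/-- All duplicate-free lists over a finite type. -/
noncomputable def allChains (S : Type) [DecidableEq S] [Fintype S] : List (List S) :=
  (Finset.univ.toList (α := S)).permutations.flatMap List.inits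

lemma nodup_of_mem_allChains [Fintype S] {cc : List S} (h : cc ∈ allChains S) : cc.Nodup := by
  rw [allChains, List.mem_flatMap] at h
  obtain ⟨pp, hp, hcc⟩ := h
  have h1 : List.Perm pp Finset.univ.toList := List.mem_permutations.mp hp
  have h2 : pp.Nodup := h1.nodup_iff.mpr (Finset.nodup_toList _)
  exact h2.sublist ((List.mem_inits _ _).mp hcc).sublist

lemma mem_allChains_of_nodup [Fintype S] {cc : List S} (h : cc.Nodup) : cc ∈ allChains S := by
  classical
  set rest : List S := (Finset.univ.toList (α := S)).filter (fun a => a ∉ cc) with hrest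
  have hrn : rest.Nodup := (Finset.nodup_toList _).filter _
  have hdisj : cc.Disjoint rest := by
    intro a hacc harest
    have h2 := (List.mem_filter.mp harest).2
    simp at h2
    exact h2 hacc
  have hfull : (cc ++ rest).Nodup := h.append hrn hdisj
  have hmem : ∀ a : S, a ∈ cc ++ rest := by
    intro a
    by_cases ha : a ∈ cc
    · exact List.mem_append_left _ ha
    · refine List.mem_append_right _ ?_
      rw [hrest, List.mem_filter]
      exact ⟨Finset.mem_toList.mpr (Finset.mem_univ a), by simpa using ha⟩
  have hperm : List.Perm (cc ++ rest) Finset.univ.toList := by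
    refine (List.perm_ext_iff_of_nodup hfull (Finset.nodup_toList _)).mpr ?_
    intro a
    simp [hmem a, Finset.mem_toList]
  rw [allChains, List.mem_flatMap]
  exact ⟨cc ++ rest, List.mem_permutations.mpr hperm,
    (List.mem_inits _ _).mpr ⟨rest, rfl⟩⟩

lemma le_foldr_max_base (l : List ℝ) (b : ℝ) : b ≤ l.foldr max b := by
  induction l with
  | nil => simp
  | cons a t ih => exact le_trans ih (le_max_right _ _)

lemma le_foldr_max_of_mem {l : List ℝ} {a : ℝ} (b : ℝ) (h : a ∈ l) : a ≤ l.foldr max b := by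
  induction l with
  | nil => simp at h
  | cons x t ih =>
    rcases List.mem_cons.mp h with rfl | h'
    · exact le_max_left _ _
    · exact le_trans (ih h') (le_max_right _ _)

lemma foldr_max_le {l : List ℝ} {b B : ℝ} (hb : b ≤ B) (h : ∀ a ∈ l, a ≤ B) :
    l.foldr max b ≤ B := by
  induction l with
  | nil => simpa
  | cons x t ih =>
    exact max_le (h x List.mem_cons_self) (ih (fun a ha => h a (List.mem_cons_of_mem _ ha)))

lemma foldr_max_mem (l : List ℝ) (b : ℝ) : l.foldr max b = b ∨ l.foldr max b ∈ l := by
  induction l with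
  | nil => left; rfl
  | cons x t ih =>
    rcases max_cases x (t.foldr max b) with ⟨h1, _⟩ | ⟨h1, _⟩
    · right; rw [List.foldr_cons, h1]; exact List.mem_cons_self
    · rcases ih with h | h
      · left; rw [List.foldr_cons, h1, h]
      · right; rw [List.foldr_cons, h1]; exact List.mem_cons_of_mem _ h

/-- The minimal potential: max over duplicate-free chains starting at `s`. -/
noncomputable def pot [Fintype S] (d : S → S → ℝ) (s : S) : ℝ :=
  (((allChains S).filter (fun cc => cc.head? = some s)).map (chainSum d)).foldr max 0

lemma pot_nonneg [Fintype S] (d : S → S → ℝ) (s : S) : 0 ≤ pot d s :=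
  le_foldr_max_base _ _

lemma le_pot [Fintype S] (d : S → S → ℝ) {s : S} {cc : List S}
    (hnd : cc.Nodup) (hh : cc.head? = some s) : chainSum d cc ≤ pot d s := by
  refine le_foldr_max_of_mem _ (List.mem_map.mpr ⟨cc, ?_, rfl⟩)
  rw [List.mem_filter]
  exact ⟨mem_allChains_of_nodup hnd, by simpa using hh⟩

lemma pot_le [Fintype S] (d : S → S → ℝ) {s : S} {B : ℝ} (hB : 0 ≤ B)
    (h : ∀ cc : List S, cc.Nodup → cc.head? = some s → chainSum d cc ≤ B) :
    pot d s ≤ B := by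
  refine foldr_max_le hB ?_
  intro a ha
  obtain ⟨cc, hcc, rfl⟩ := List.mem_map.mp ha
  rw [List.mem_filter] at hcc
  exact h cc (nodup_of_mem_allChains hcc.1) (by simpa using hcc.2)

lemma pot_cases [Fintype S] (d : S → S → ℝ) (s : S) :
    pot d s = 0 ∨ ∃ cc : List S, cc.Nodup ∧ cc.head? = some s ∧ pot d s = chainSum d cc := by
  rcases foldr_max_mem (((allChains S).filter (fun cc => cc.head? = some s)).map (chainSum d)) 0
    with h | h
  · left; exact h
  · right
    obtain ⟨cc, hcc, hval⟩ := List.mem_map.mp h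
    rw [List.mem_filter] at hcc
    exact ⟨cc, nodup_of_mem_allChains hcc.1, by simpa using hcc.2, hval.symm⟩

lemma potential [Fintype S] [Nonempty S] (w : S → S → ℝ) (u e : S → ℝ)
    (hcyc : ∀ ρ : Equiv.Perm S, ∑ s, w s (ρ s) ≤ ∑ s, w s s)
    (hw : ∀ s t, 0 ≤ w s t)
    (hd : ∀ s t, w s t - w t t ≤ u s + e s - u t)
    (he : ∀ s, 0 ≤ e s) (hue : ∀ s, 0 ≤ u s + e s) :
    ∃ φ : S → ℝ, (∀ s, 0 ≤ φ s) ∧ (∀ s t, w s t - w t t + φ t ≤ φ s)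
      ∧ (∀ s, φ s ≤ w s s) ∧ (∀ s, φ s ≤ u s + ∑ a, e a) := by
  classical
  refine ⟨pot (fun a b => w a b - w b b), fun s => pot_nonneg _ s, ?_, ?_, ?_⟩
  · -- IC
    intro s t
    set d : S → S → ℝ := fun a b => w a b - w b b with hd'
    have hdst : d s t = w s t - w t t := rfl
    rcases pot_cases d t with h0 | ⟨cc, hnd, hh, hval⟩
    · rw [h0, add_zero]
      by_cases hst : s = t
      · subst hst
        have h1 := pot_nonneg d s
        have h2 : w s s - w s s = 0 := by ring
        linarith
      · have hnd2 : ([s, t] : List S).Nodup := by simp [hst]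
        have hle : chainSum d [s, t] ≤ pot d s := le_pot d hnd2 rfl
        have hcs : chainSum d [s, t] = w s t - w t t := by
          rw [chainSum_cons_cons]
          show w s t - w t t + chainSum d [t] = _
          show w s t - w t t + 0 = _
          ring
        linarith
    · obtain ⟨l, rfl⟩ : ∃ l, cc = t :: l := by
        cases cc with
        | nil => simp at hh
        | cons y l =>
          have hy : y = t := by simpa using hh
          exact ⟨l, by rw [hy]⟩
      by_cases hst : s = t
      · subst hst
        have h2 : w s s - w s s = 0 := by ring
        rw [h2, zero_add]
      · by_cases hmem : s ∈ t :: l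
        · -- split the chain at s
          have hsl : s ∈ l := by
            rcases List.mem_cons.mp hmem with h | h
            · exact absurd h hst
            · exact h
          obtain ⟨l₁, l₂, rfl⟩ := List.append_of_mem hsl
          -- cc = t :: (l₁ ++ s :: l₂)
          have hnd0 : ((t :: l₁) ++ s :: l₂).Nodup := by
            simpa [List.cons_append] using hnd
          have hndparts := List.nodup_append'.mp hnd0
          have hndtl1 : (s :: t :: l₁).Nodup := by
            refine List.nodup_cons.mpr ⟨?_, hndparts.1⟩
            intro hs
            exact (hndparts.2.2 hs) List.mem_cons_self
          have hcyc1 : chainSum d ((s :: t :: l₁) ++ [s]) ≤ 0 :=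
            cycle_nonpos w hcyc s (t :: l₁) hndtl1
          have heq : chainSum d (t :: (l₁ ++ s :: l₂))
              = chainSum d ((t :: l₁) ++ [s]) + chainSum d (s :: l₂) := by
            have h1 := chainSum_append_cons d s l₂ (t :: l₁) (by simp)
            simpa [List.cons_append] using h1
          have hcyceq : chainSum d ((s :: t :: l₁) ++ [s])
              = (w s t - w t t) + chainSum d ((t :: l₁) ++ [s]) := by
            have : (s :: t :: l₁) ++ [s] = s :: t :: (l₁ ++ [s]) := by simp
            rw [this, chainSum_cons_cons]
            rfl
          have hccle : chainSum d (s :: l₂) ≤ pot d s := le_pot d hndparts.2.1 rfl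
          rw [hval, heq]
          rw [hcyceq] at hcyc1
          linarith
        · -- prepend s
          have hnd2 : (s :: t :: l).Nodup := List.nodup_cons.mpr ⟨hmem, hnd⟩
          have hle : chainSum d (s :: t :: l) ≤ pot d s := le_pot d hnd2 rfl
          rw [chainSum_cons_cons] at hle
          rw [hval]
          exact hle
  · -- φ s ≤ w s s
    intro s
    set d : S → S → ℝ := fun a b => w a b - w b b with hd'
    refine pot_le d (hw s s) ?_
    intro cc hnd hh
    obtain ⟨l, rfl⟩ : ∃ l, cc = s :: l := by
      cases cc with
      | nil => simp at hh
      | cons y l =>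
        have hy : y = s := by simpa using hh
        exact ⟨l, by rw [hy]⟩
    have hcyc1 : chainSum d ((s :: l) ++ [s]) ≤ 0 := cycle_nonpos w hcyc s l hnd
    have hconcat := chainSum_concat d s (s :: l) (by simp)
    rw [hconcat] at hcyc1
    have hwls := hw ((s :: l).getLast (by simp)) s
    have hdl : d ((s :: l).getLast (by simp)) s = w ((s :: l).getLast (by simp)) s - w s s := rfl
    linarith
  · -- φ s ≤ u s + ∑ e
    intro s
    set d : S → S → ℝ := fun a b => w a b - w b b with hd'
    -- chain upper bound
    have chain_bound : ∀ (l : List S) (a : S), (a :: l).Nodup →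
        chainSum d (a :: l) + u ((a :: l).getLast (by simp)) ≤
          u a + ∑ x ∈ ((a :: l).dropLast).toFinset, e x := by
      intro l
      induction l with
      | nil =>
        intro a _
        show chainSum d [a] + u a ≤ u a + _
        show (0:ℝ) + u a ≤ u a + _
        simp
      | cons b t ih =>
        intro a hnd
        have hnd' : (b :: t).Nodup := hnd.of_cons
        have ha : a ∉ b :: t := (List.nodup_cons.mp hnd).1
        have ihb := ih b hnd'
        have hlast : (a :: b :: t).getLast (by simp) = (b :: t).getLast (by simp) :=
          List.getLast_cons (by simp)
        have hdrop : (a :: b :: t).dropLast = a :: (b :: t).dropLast := by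
          simp
        have hnotmem : a ∉ ((b :: t).dropLast).toFinset := by
          intro hmem
          exact ha ((List.dropLast_sublist (b :: t)).subset (List.mem_toFinset.mp hmem))
        rw [chainSum_cons_cons, hlast, hdrop, List.toFinset_cons, Finset.sum_insert hnotmem]
        have hab := hd a b
        have hdab : d a b = w a b - w b b := rfl
        linarith
    have hes : e s ≤ ∑ a, e a :=
      Finset.single_le_sum (fun a _ => he a) (Finset.mem_univ s)
    refine pot_le d (by linarith [hue s]) ?_
    intro cc hnd hh
    obtain ⟨l, rfl⟩ : ∃ l, cc = s :: l := by
      cases cc with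
      | nil => simp at hh
      | cons y l =>
        have hy : y = s := by simpa using hh
        exact ⟨l, by rw [hy]⟩
    have hcb := chain_bound l s hnd
    set lst := (s :: l).getLast (by simp) with hlst
    have hlnot : lst ∉ ((s :: l).dropLast).toFinset := by
      intro hmem
      have hdecomp := List.dropLast_append_getLast (l := s :: l) (by simp)
      rw [← hlst] at hdecomp
      have hnd2 : ((s :: l).dropLast ++ [lst]).Nodup := by rw [hdecomp]; exact hnd
      have hdisj := (List.nodup_append'.mp hnd2).2.2
      exact hdisj (List.mem_toFinset.mp hmem) List.mem_cons_self
    have hsum : ∑ x ∈ insert lst ((s :: l).dropLast).toFinset, e x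
        = ∑ x ∈ ((s :: l).dropLast).toFinset, e x + e lst := by
      rw [Finset.sum_insert hlnot]; ring
    have hsumle : ∑ x ∈ insert lst ((s :: l).dropLast).toFinset, e x ≤ ∑ a, e a :=
      Finset.sum_le_sum_of_subset_of_nonneg (Finset.subset_univ _) (fun a _ _ => he a)
    have hulst : 0 ≤ u lst + e lst := hue lst
    linarith

lemma core [Fintype S] [Nonempty S] (B : S → S → ℝ) (P r : S → ℝ)
    (hB : ∀ s t, 0 ≤ B s t)
    (hr : ∀ s t, B s t - P t ≤ B s s - P s + r s)
    (hIR : ∀ s, 0 ≤ B s s - P s) :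
    ∃ (π : Equiv.Perm S) (Q : S → ℝ),
      (∀ s, 0 ≤ Q s) ∧
      (∀ s t, B s (π t) - Q t ≤ B s (π s) - Q s) ∧
      (∀ s, 0 ≤ B s (π s) - Q s) ∧
      (∑ s, B s s ≤ ∑ s, B s (π s)) ∧
      (∑ s, P s - (Fintype.card S : ℝ) * (∑ s, r s) ≤ ∑ s, Q s) := by
  classical
  obtain ⟨π, -, hπmax⟩ := Finset.exists_max_image (Finset.univ : Finset (Equiv.Perm S))
      (fun ρ => ∑ s, B s (ρ s)) ⟨1, Finset.mem_univ 1⟩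
  have hcyc : ∀ ρ : Equiv.Perm S, ∑ s, B s (π (ρ s)) ≤ ∑ s, B s (π s) := by
    intro ρ
    have := hπmax (π * ρ) (Finset.mem_univ _)
    simpa [Equiv.Perm.mul_apply] using this
  have hwelf : ∑ s, B s s ≤ ∑ s, B s (π s) := by
    have := hπmax 1 (Finset.mem_univ _)
    simpa using this
  have hr0 : ∀ s, 0 ≤ r s := by
    intro s; have := hr s s; linarith
  have he : ∀ s, 0 ≤ (B s s - P s + r s) - (B s (π s) - P (π s)) := by
    intro s; have := hr s (π s); linarith
  have hue : ∀ s, 0 ≤ (B s (π s) - P (π s)) + ((B s s - P s + r s) - (B s (π s) - P (π s))) := by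
    intro s; have h1 := hIR s; have h2 := hr0 s; linarith
  have hd : ∀ s t, (fun a b => B a (π b)) s t - (fun a b => B a (π b)) t t
      ≤ (B s (π s) - P (π s)) + ((B s s - P s + r s) - (B s (π s) - P (π s)))
        - (B t (π t) - P (π t)) := by
    intro s t
    have := hr s (π t)
    simp only
    linarith
  have hPsum : ∑ s, P (π s) = ∑ s, P s := Equiv.sum_comp π P
  obtain ⟨φ, hφ0, hφIC, hφw, hφu⟩ := potential (fun a b => B a (π b))
    (fun s => B s (π s) - P (π s))
    (fun s => (B s s - P s + r s) - (B s (π s) - P (π s)))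
    hcyc (fun s t => hB s (π t)) hd he hue
  have hesum : ∑ s, ((B s s - P s + r s) - (B s (π s) - P (π s))) ≤ ∑ s, r s := by
    have h1 : ∑ s, ((B s s - P s + r s) - (B s (π s) - P (π s)))
        = (∑ s, (B s s - P s + r s)) - ∑ s, (B s (π s) - P (π s)) :=
      Finset.sum_sub_distrib _ _
    have h2 : ∑ s, (B s (π s) - P (π s)) = ∑ s, B s (π s) - ∑ s, P s := by
      rw [Finset.sum_sub_distrib, hPsum]
    have h3 : ∑ s, (B s s - P s + r s) = (∑ s, B s s - ∑ s, P s) + ∑ s, r s := by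
      rw [Finset.sum_add_distrib, Finset.sum_sub_distrib]
    rw [h1, h2, h3]
    linarith
  refine ⟨π, fun s => B s (π s) - φ s, ?_, ?_, ?_, hwelf, ?_⟩
  · intro s
    show 0 ≤ B s (π s) - φ s
    have := hφw s
    linarith
  · intro s t
    show B s (π t) - (B t (π t) - φ t) ≤ B s (π s) - (B s (π s) - φ s)
    have := hφIC s t
    linarith
  · intro s
    show 0 ≤ B s (π s) - (B s (π s) - φ s)
    have := hφ0 s
    linarith
  · show ∑ s, P s - (Fintype.card S : ℝ) * (∑ s, r s) ≤ ∑ s : S, (B s (π s) - φ s)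
    have hsum1 : ∑ s : S, (B s (π s) - φ s) = ∑ s, B s (π s) - ∑ s, φ s :=
      Finset.sum_sub_distrib _ _
    have hsum2 : ∑ s, φ s ≤ ∑ s : S,
        ((B s (π s) - P (π s)) + ∑ a, ((B a a - P a + r a) - (B a (π a) - P (π a)))) :=
      Finset.sum_le_sum (fun s _ => hφu s)
    have hsum3 : ∑ s : S,
        ((B s (π s) - P (π s)) + ∑ a, ((B a a - P a + r a) - (B a (π a) - P (π a))))
        = ∑ s, (B s (π s) - P (π s))
          + (Fintype.card S : ℝ) * ∑ a, ((B a a - P a + r a) - (B a (π a) - P (π a))) := by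
      rw [Finset.sum_add_distrib, Finset.sum_const, Finset.card_univ, nsmul_eq_mul]
    have hsum4 : ∑ s, (B s (π s) - P (π s)) = ∑ s, B s (π s) - ∑ s, P s := by
      rw [Finset.sum_sub_distrib, hPsum]
    have hcard : (0:ℝ) ≤ (Fintype.card S : ℝ) := Nat.cast_nonneg _
    have hmul : (Fintype.card S : ℝ) * ∑ a, ((B a a - P a + r a) - (B a (π a) - P (π a)))
        ≤ (Fintype.card S : ℝ) * ∑ a, r a :=
      mul_le_mul_of_nonneg_left hesum hcard
    linarith

section PiLemmas

variable {n : ℕ} {T : Fin n → Type} {O : Type}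

lemma sum_update_pi [∀ i, Fintype (T i)] (i : Fin n) (H : (∀ j, T j) → ℝ) :
    ∑ s : T i, ∑ t : ∀ j, T j, H (Function.update t i s)
      = (Fintype.card (T i) : ℝ) * ∑ t : ∀ j, T j, H t := by
  classical
  have hinv : Function.Involutive
      (fun q : T i × (∀ j, T j) => (q.2 i, Function.update q.2 i q.1)) := by
    rintro ⟨s, t⟩
    simp
  have h1 : ∑ s : T i, ∑ t : ∀ j, T j, H (Function.update t i s)
      = ∑ q : T i × (∀ j, T j), H (Function.update q.2 i q.1) := by
    rw [Fintype.sum_prod_type]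
  have h2 : ∑ q : T i × (∀ j, T j), H (Function.update q.2 i q.1)
      = ∑ q : T i × (∀ j, T j), H q.2 := by
    have h := Equiv.sum_comp (hinv.toPerm _) (fun q : T i × (∀ j, T j) => H q.2)
    simpa using h
  have h3 : ∑ q : T i × (∀ j, T j), H q.2 = ∑ _s : T i, ∑ t : ∀ j, T j, H t := by
    rw [Fintype.sum_prod_type]
  rw [h1, h2, h3, Finset.sum_const, Finset.card_univ, nsmul_eq_mul]

lemma sum_comp_pi_perm [∀ i, Fintype (T i)] (π : ∀ j, Equiv.Perm (T j))
    (F : (∀ j, T j) → ℝ) :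
    ∑ t : ∀ j, T j, F (fun j => π j (t j)) = ∑ t : ∀ j, T j, F t :=
  Equiv.sum_comp (Equiv.piCongrRight π) F

/-- Unweighted interim allocation utility. -/
noncomputable def GG [∀ i, Fintype (T i)] [Fintype O]
    (v : (i : Fin n) → T i → O → ℝ) (x : (∀ i, T i) → O → ℝ)
    (i : Fin n) (s a : T i) : ℝ :=
  ∑ o, (∑ t : ∀ j, T j, x (Function.update t i a) o) * v i s o

/-- Unweighted interim payment. -/
noncomputable def PB [∀ i, Fintype (T i)]
    (p : Fin n → (∀ i, T i) → ℝ) (i : Fin n) (a : T i) : ℝ :=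
  ∑ t : ∀ j, T j, p i (Function.update t i a)

lemma GG_nonneg [∀ i, Fintype (T i)] [Fintype O]
    {v : (i : Fin n) → T i → O → ℝ} {x : (∀ i, T i) → O → ℝ}
    (hv : ∀ i t o, 0 ≤ v i t o) (hx0 : ∀ t o, 0 ≤ x t o)
    (i : Fin n) (s a : T i) : 0 ≤ GG v x i s a := by
  refine Finset.sum_nonneg ?_
  intro o _
  refine mul_nonneg (Finset.sum_nonneg ?_) (hv i s o)
  intro t _
  exact hx0 _ o

lemma interim_conv [∀ i, Fintype (T i)] [Fintype O]
    (f : ∀ i, T i → ℝ) (v : (i : Fin n) → T i → O → ℝ)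
    (x : (∀ i, T i) → O → ℝ) (p : Fin n → (∀ i, T i) → ℝ)
    {c : ℝ} (hκ : ∀ t : ∀ j, T j, (∏ j, f j (t j)) = c)
    (i : Fin n) (s a : T i) :
    Stmt18.interimU f v x p i s a = c * (GG v x i s a - PB p i a) := by
  unfold Stmt18.interimU GG PB
  simp_rw [hκ, ← Finset.mul_sum, mul_assoc]
  rw [← Finset.mul_sum, ← mul_sub]

lemma GG_sub_PB [∀ i, Fintype (T i)] [Fintype O]
    (v : (i : Fin n) → T i → O → ℝ) (x : (∀ i, T i) → O → ℝ)
    (p : Fin n → (∀ i, T i) → ℝ) (i : Fin n) (s a : T i) :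
    GG v x i s a - PB p i a
      = ∑ t : ∀ j, T j, Stmt18.expostU v x p i s (Function.update t i a) := by
  unfold GG PB Stmt18.expostU
  have h1 : ∑ o, (∑ t : ∀ j, T j, x (Function.update t i a) o) * v i s o
      = ∑ t : ∀ j, T j, ∑ o, x (Function.update t i a) o * v i s o := by
    simp_rw [Finset.sum_mul]
    exact Finset.sum_comm
  rw [h1, ← Finset.sum_sub_distrib]

end PiLemmas

end Stmt18Proof


open Stmt18

/-- Machine-learning based automated mechanism design: for independent
uniform type distributions, if an `ε`-EEIC and interim IR mechanism `M` achieves the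
blended objective `μ_λ(M) ≥ V − ε`, then there is a BIC and interim IR mechanism `M'`
with `μ_λ(M') ≥ V − (1−λ)·(∑ i |T i|)·ε − ε`. -/
theorem ML_based_AMD
    {n : ℕ} {T : Fin n → Type} {O : Type}
    [∀ i, Fintype (T i)] [∀ i, Nonempty (T i)] [Fintype O]
    (f : ∀ i, T i → ℝ)
    -- each f i is the uniform distribution on T i
    (hfu : ∀ i (t : T i), f i t = 1 / (Fintype.card (T i) : ℝ))
    (v : (i : Fin n) → T i → O → ℝ) (hv : ∀ i t o, 0 ≤ v i t o)
    (lam : ℝ) (hlam0 : 0 ≤ lam) (hlam1 : lam ≤ 1)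
    (ε : ℝ) (hε : 0 ≤ ε) (V : ℝ)
    (x : (∀ i, T i) → O → ℝ) (p : Fin n → (∀ i, T i) → ℝ)
    (hx0 : ∀ t o, 0 ≤ x t o) (hx1 : ∀ t, ∑ o, x t o = 1)
    (hp : ∀ i t, 0 ≤ p i t)
    -- M is ε-EEIC
    (hEEIC : ∀ i : Fin n,
      ∑ t : ∀ j, T j, (∏ j, f j (t j)) *
        ((Finset.univ.sup' Finset.univ_nonempty fun s' : T i =>
            expostU v x p i (t i) (Function.update t i s'))
          - expostU v x p i (t i) t) ≤ ε)
    -- M is interim IR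
    (hIR : ∀ (i : Fin n) (s : T i), 0 ≤ interimU f v x p i s s)
    -- μ_λ(M) ≥ V − ε
    (hmu : (1 - lam) * Rev f p + lam * Wel f v x ≥ V - ε) :
    ∃ (x' : (∀ i, T i) → O → ℝ) (p' : Fin n → (∀ i, T i) → ℝ),
      (∀ t o, 0 ≤ x' t o) ∧ (∀ t, ∑ o, x' t o = 1) ∧ (∀ i t, 0 ≤ p' i t) ∧
      (∀ (i : Fin n) (s s' : T i),
        interimU f v x' p' i s s ≥ interimU f v x' p' i s s') ∧
      (∀ (i : Fin n) (s : T i), 0 ≤ interimU f v x' p' i s s) ∧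
      (1 - lam) * Rev f p' + lam * Wel f v x'
        ≥ V - (1 - lam) * (∑ i, (Fintype.card (T i) : ℝ)) * ε - ε := by
    classical
  obtain ⟨x₀, p₀⟩ : True := ⟨⟩
  have hcpos : ∀ i : Fin n, (0:ℝ) < (Fintype.card (T i) : ℝ) := by
    intro i
    exact_mod_cast Fintype.card_pos
  have hNpos : (0:ℝ) < (Fintype.card (∀ j, T j) : ℝ) := by
    exact_mod_cast Fintype.card_pos
  set N : ℝ := (Fintype.card (∀ j, T j) : ℝ) with hN
  have hNne : N ≠ 0 := ne_of_gt hNpos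
  have hκ : ∀ t : ∀ j, T j, (∏ j, f j (t j)) = N⁻¹ := by
    intro t
    have h1 : (∏ j, f j (t j)) = ∏ j, ((Fintype.card (T j) : ℝ))⁻¹ :=
      Finset.prod_congr rfl (fun j _ => by rw [hfu j (t j), one_div])
    have h2 : (∏ j, (Fintype.card (T j) : ℝ)) = N := by
      rw [hN, Fintype.card_pi]
      push_cast
      rfl
    rw [h1, Finset.prod_inv_distrib, h2]
  set rr : (i : Fin n) → T i → ℝ := fun i s =>
    (Finset.univ.sup' Finset.univ_nonempty fun a : T i =>
      Stmt18Proof.GG v x i s a - Stmt18Proof.PB p i a)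
      - (Stmt18Proof.GG v x i s s - Stmt18Proof.PB p i s) with hrr
  have hcoreAll : ∀ i : Fin n, ∃ (π : Equiv.Perm (T i)) (Q : T i → ℝ),
      (∀ s, 0 ≤ Q s) ∧
      (∀ s a, Stmt18Proof.GG v x i s (π a) - Q a ≤ Stmt18Proof.GG v x i s (π s) - Q s) ∧
      (∀ s, 0 ≤ Stmt18Proof.GG v x i s (π s) - Q s) ∧
      (∑ s, Stmt18Proof.GG v x i s s ≤ ∑ s, Stmt18Proof.GG v x i s (π s)) ∧
      (∑ s, Stmt18Proof.PB p i s - (Fintype.card (T i) : ℝ) * (∑ s, rr i s) ≤ ∑ s, Q s) := by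
    intro i
    haveI := Classical.decEq (T i)
    refine Stmt18Proof.core (Stmt18Proof.GG v x i) (Stmt18Proof.PB p i) (rr i)
      (fun s a => Stmt18Proof.GG_nonneg hv hx0 i s a) ?_ ?_
    · intro s a
      have h1 : Stmt18Proof.GG v x i s a - Stmt18Proof.PB p i a
          ≤ Finset.univ.sup' Finset.univ_nonempty
            (fun b : T i => Stmt18Proof.GG v x i s b - Stmt18Proof.PB p i b) :=
        Finset.le_sup' (fun b : T i => Stmt18Proof.GG v x i s b - Stmt18Proof.PB p i b)
          (Finset.mem_univ a)
      have h2 : rr i s = (Finset.univ.sup' Finset.univ_nonempty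
            (fun b : T i => Stmt18Proof.GG v x i s b - Stmt18Proof.PB p i b))
          - (Stmt18Proof.GG v x i s s - Stmt18Proof.PB p i s) := rfl
      linarith
    · intro s
      have h1 := hIR i s
      rw [Stmt18Proof.interim_conv f v x p hκ i s s] at h1
      have h2 : 0 ≤ N * (N⁻¹ * (Stmt18Proof.GG v x i s s - Stmt18Proof.PB p i s)) :=
        mul_nonneg (le_of_lt hNpos) h1
      rwa [← mul_assoc, mul_inv_cancel₀ hNne, one_mul] at h2
  choose π Q hQ0 hQIC hQIR hQW hQR using hcoreAll
  -- regret sum bound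
  have hrsum : ∀ i : Fin n, ∑ s, rr i s ≤ (Fintype.card (T i) : ℝ) * (N * ε) := by
    intro i
    set Ψ : (∀ j, T j) → ℝ := fun t =>
      (Finset.univ.sup' Finset.univ_nonempty fun a : T i =>
        expostU v x p i (t i) (Function.update t i a)) - expostU v x p i (t i) t with hΨ
    have hpoint : ∀ s : T i, rr i s ≤ ∑ t : ∀ j, T j, Ψ (Function.update t i s) := by
      intro s
      have hupdΨ : ∀ t : ∀ j, T j, Ψ (Function.update t i s)
          = (Finset.univ.sup' Finset.univ_nonempty fun a : T i =>
              expostU v x p i s (Function.update t i a))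
            - expostU v x p i s (Function.update t i s) := by
        intro t
        rw [hΨ]
        simp only [Function.update_self, Function.update_idem]
      have h1 : (Finset.univ.sup' Finset.univ_nonempty fun a : T i =>
            Stmt18Proof.GG v x i s a - Stmt18Proof.PB p i a)
          ≤ ∑ t : ∀ j, T j, Finset.univ.sup' Finset.univ_nonempty
              (fun a : T i => expostU v x p i s (Function.update t i a)) := by
        refine Finset.sup'_le _ _ ?_
        intro a _
        rw [Stmt18Proof.GG_sub_PB]
        refine Finset.sum_le_sum ?_
        intro t _
        exact Finset.le_sup' (fun b : T i => expostU v x p i s (Function.update t i b))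
          (Finset.mem_univ a)
      have h2 : Stmt18Proof.GG v x i s s - Stmt18Proof.PB p i s
          = ∑ t : ∀ j, T j, expostU v x p i s (Function.update t i s) :=
        Stmt18Proof.GG_sub_PB v x p i s s
      have h3 : rr i s = (Finset.univ.sup' Finset.univ_nonempty fun a : T i =>
            Stmt18Proof.GG v x i s a - Stmt18Proof.PB p i a)
          - (Stmt18Proof.GG v x i s s - Stmt18Proof.PB p i s) := rfl
      have h4 : ∑ t : ∀ j, T j, Ψ (Function.update t i s)
          = (∑ t : ∀ j, T j, Finset.univ.sup' Finset.univ_nonempty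
              (fun a : T i => expostU v x p i s (Function.update t i a)))
            - ∑ t : ∀ j, T j, expostU v x p i s (Function.update t i s) := by
        simp_rw [hupdΨ]
        rw [Finset.sum_sub_distrib]
      rw [h3, h4, h2]
      linarith
    have hsum1 : ∑ s, rr i s ≤ ∑ s, ∑ t : ∀ j, T j, Ψ (Function.update t i s) :=
      Finset.sum_le_sum (fun s _ => hpoint s)
    have hsum2 : ∑ s, ∑ t : ∀ j, T j, Ψ (Function.update t i s)
        = (Fintype.card (T i) : ℝ) * ∑ t : ∀ j, T j, Ψ t :=
      Stmt18Proof.sum_update_pi i Ψ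
    have hEE : N⁻¹ * ∑ t : ∀ j, T j, Ψ t ≤ ε := by
      have h := hEEIC i
      simp_rw [hκ] at h
      rw [← Finset.mul_sum] at h
      rw [hΨ]
      exact h
    have hΨle : ∑ t : ∀ j, T j, Ψ t ≤ N * ε := by
      have h5 : N * (N⁻¹ * ∑ t : ∀ j, T j, Ψ t) ≤ N * ε :=
        mul_le_mul_of_nonneg_left hEE (le_of_lt hNpos)
      rwa [← mul_assoc, mul_inv_cancel₀ hNne, one_mul] at h5
    calc ∑ s, rr i s ≤ (Fintype.card (T i) : ℝ) * ∑ t : ∀ j, T j, Ψ t := by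
          rw [← hsum2]; exact hsum1
      _ ≤ (Fintype.card (T i) : ℝ) * (N * ε) :=
          mul_le_mul_of_nonneg_left hΨle (le_of_lt (hcpos i))
  -- the new mechanism
  set x' : (∀ j, T j) → O → ℝ := fun t => x (fun j => π j (t j)) with hx'
  set p' : Fin n → (∀ j, T j) → ℝ := fun i t => N⁻¹ * Q i (t i) with hp'
  -- interim characterization of the new mechanism
  have hGGx' : ∀ (i : Fin n) (s a : T i),
      Stmt18Proof.GG v x' i s a = Stmt18Proof.GG v x i s (π i a) := by
    intro i s a
    unfold Stmt18Proof.GG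
    refine Finset.sum_congr rfl ?_
    intro o _
    congr 1
    have hprof : ∀ t : ∀ j, T j, (fun j => π j (Function.update t i a j))
        = Function.update (fun j => π j (t j)) i (π i a) := by
      intro t
      funext j
      exact Function.apply_update (fun j (y : T j) => π j y) t i a j
    have hupd : ∀ t : ∀ j, T j, x' (Function.update t i a)
        = x (Function.update (fun j => π j (t j)) i (π i a)) := by
      intro t
      rw [hx']
      show x (fun j => π j (Function.update t i a j)) = _
      rw [hprof t]
    simp_rw [hupd]
    exact Stmt18Proof.sum_comp_pi_perm π
      (fun u => x (Function.update u i (π i a)) o)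
  have hPBp' : ∀ (i : Fin n) (a : T i), Stmt18Proof.PB p' i a = Q i a := by
    intro i a
    unfold Stmt18Proof.PB
    rw [hp']
    simp only [Function.update_self]
    rw [Finset.sum_const, Finset.card_univ, nsmul_eq_mul, ← hN, ← mul_assoc,
      mul_inv_cancel₀ hNne, one_mul]
  have hInterim' : ∀ (i : Fin n) (s a : T i),
      interimU f v x' p' i s a = N⁻¹ * (Stmt18Proof.GG v x i s (π i a) - Q i a) := by
    intro i s a
    rw [Stmt18Proof.interim_conv f v x' p' hκ i s a, hGGx', hPBp']
  refine ⟨x', p', ?_, ?_, ?_, ?_, ?_, ?_⟩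
  · intro t o
    exact hx0 _ o
  · intro t
    exact hx1 _
  · intro i t
    exact mul_nonneg (inv_nonneg.mpr (le_of_lt hNpos)) (hQ0 i (t i))
  · intro i s a
    rw [hInterim' i s s, hInterim' i s a]
    exact mul_le_mul_of_nonneg_left (hQIC i s a) (inv_nonneg.mpr (le_of_lt hNpos))
  · intro i s
    rw [hInterim' i s s]
    exact mul_nonneg (inv_nonneg.mpr (le_of_lt hNpos)) (hQIR i s)
  · -- the objective bound
    have hPBsum : ∀ i : Fin n, ∑ s, Stmt18Proof.PB p i s
        = (Fintype.card (T i) : ℝ) * ∑ t : ∀ j, T j, p i t := by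
      intro i
      exact Stmt18Proof.sum_update_pi i (fun t => p i t)
    have hQsum : ∀ i : Fin n, (Fintype.card (T i) : ℝ) * ∑ t : ∀ j, T j, Q i (t i)
        = N * ∑ s, Q i s := by
      intro i
      have h := Stmt18Proof.sum_update_pi i (fun t => Q i (t i))
      simp only [Function.update_self] at h
      have h2 : ∑ s : T i, ∑ _t : ∀ j, T j, Q i s = ∑ s : T i, N * Q i s := by
        refine Finset.sum_congr rfl ?_
        intro s _
        rw [Finset.sum_const, Finset.card_univ, nsmul_eq_mul, ← hN]
      rw [h2, ← Finset.mul_sum] at h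
      exact h.symm
    -- revenue of the original mechanism
    have hRevp : Rev f p = N⁻¹ * ∑ i, ∑ t : ∀ j, T j, p i t := by
      unfold Rev
      simp_rw [hκ]
      rw [← Finset.mul_sum, Finset.sum_comm]
    have hRevp' : Rev f p' = N⁻¹ * ∑ i, N⁻¹ * ∑ t : ∀ j, T j, Q i (t i) := by
      unfold Rev
      simp_rw [hκ]
      rw [← Finset.mul_sum, Finset.sum_comm]
      congr 1
      refine Finset.sum_congr rfl ?_
      intro i _
      rw [hp', ← Finset.mul_sum]
    -- per-agent revenue comparison
    have hperAgent : ∀ i : Fin n, ∑ t : ∀ j, T j, p i t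
        ≤ N⁻¹ * ∑ t : ∀ j, T j, Q i (t i) + (Fintype.card (T i) : ℝ) * (N * ε) := by
      intro i
      have h1 := hQR i
      have h2 := hrsum i
      have hc := hcpos i
      have h3 : (Fintype.card (T i) : ℝ) * (∑ s, rr i s)
          ≤ (Fintype.card (T i) : ℝ) * ((Fintype.card (T i) : ℝ) * (N * ε)) :=
        mul_le_mul_of_nonneg_left h2 (le_of_lt hc)
      have h4 : (Fintype.card (T i) : ℝ) * ∑ t : ∀ j, T j, p i t
          ≤ ∑ s, Q i s + (Fintype.card (T i) : ℝ) * ((Fintype.card (T i) : ℝ) * (N * ε)) := by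
        rw [← hPBsum i]
        linarith
      have h5 : ∑ s, Q i s = N⁻¹ * ((Fintype.card (T i) : ℝ) * ∑ t : ∀ j, T j, Q i (t i)) := by
        rw [hQsum i, ← mul_assoc, inv_mul_cancel₀ hNne, one_mul]
      rw [h5] at h4
      have h6 : (Fintype.card (T i) : ℝ)⁻¹ * ((Fintype.card (T i) : ℝ) * ∑ t : ∀ j, T j, p i t)
          ≤ (Fintype.card (T i) : ℝ)⁻¹ *
            (N⁻¹ * ((Fintype.card (T i) : ℝ) * ∑ t : ∀ j, T j, Q i (t i))
              + (Fintype.card (T i) : ℝ) * ((Fintype.card (T i) : ℝ) * (N * ε))) :=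
        mul_le_mul_of_nonneg_left h4 (inv_nonneg.mpr (le_of_lt hc))
      have hcne : (Fintype.card (T i) : ℝ) ≠ 0 := ne_of_gt hc
      calc ∑ t : ∀ j, T j, p i t
          = (Fintype.card (T i) : ℝ)⁻¹ * ((Fintype.card (T i) : ℝ) * ∑ t : ∀ j, T j, p i t) := by
            rw [← mul_assoc, inv_mul_cancel₀ hcne, one_mul]
        _ ≤ (Fintype.card (T i) : ℝ)⁻¹ *
            (N⁻¹ * ((Fintype.card (T i) : ℝ) * ∑ t : ∀ j, T j, Q i (t i))
              + (Fintype.card (T i) : ℝ) * ((Fintype.card (T i) : ℝ) * (N * ε))) := h6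
        _ = N⁻¹ * ∑ t : ∀ j, T j, Q i (t i) + (Fintype.card (T i) : ℝ) * (N * ε) := by
            field_simp
    -- total revenue comparison
    have hRevCompare : Rev f p ≤ Rev f p' + (∑ i, (Fintype.card (T i) : ℝ)) * ε := by
      rw [hRevp, hRevp']
      have h1 : ∑ i, ∑ t : ∀ j, T j, p i t
          ≤ ∑ i, (N⁻¹ * ∑ t : ∀ j, T j, Q i (t i) + (Fintype.card (T i) : ℝ) * (N * ε)) :=
        Finset.sum_le_sum (fun i _ => hperAgent i)
      have h2 : ∑ i, (N⁻¹ * ∑ t : ∀ j, T j, Q i (t i) + (Fintype.card (T i) : ℝ) * (N * ε))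
          = (∑ i, N⁻¹ * ∑ t : ∀ j, T j, Q i (t i))
            + (∑ i, (Fintype.card (T i) : ℝ)) * (N * ε) := by
        rw [Finset.sum_add_distrib, ← Finset.sum_mul]
      have h3 : N⁻¹ * ((∑ i, N⁻¹ * ∑ t : ∀ j, T j, Q i (t i))
            + (∑ i, (Fintype.card (T i) : ℝ)) * (N * ε))
          = N⁻¹ * (∑ i, N⁻¹ * ∑ t : ∀ j, T j, Q i (t i))
            + (∑ i, (Fintype.card (T i) : ℝ)) * ε := by
        rw [mul_add]
        congr 1
        field_simp
      have h4 : N⁻¹ * ∑ i, ∑ t : ∀ j, T j, p i t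
          ≤ N⁻¹ * ((∑ i, N⁻¹ * ∑ t : ∀ j, T j, Q i (t i))
            + (∑ i, (Fintype.card (T i) : ℝ)) * (N * ε)) := by
        refine mul_le_mul_of_nonneg_left ?_ (inv_nonneg.mpr (le_of_lt hNpos))
        calc ∑ i, ∑ t : ∀ j, T j, p i t
            ≤ ∑ i, (N⁻¹ * ∑ t : ∀ j, T j, Q i (t i) + (Fintype.card (T i) : ℝ) * (N * ε)) := h1
          _ = _ := h2
      rw [h3] at h4
      exact h4
    -- welfare comparison
    have hWelTerm : ∀ (x'' : (∀ j, T j) → O → ℝ),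
        Wel f v x'' = N⁻¹ * ∑ i, ∑ t : ∀ j, T j, ∑ o, x'' t o * v i (t i) o := by
      intro x''
      unfold Wel
      simp_rw [hκ]
      rw [← Finset.mul_sum, Finset.sum_comm]
    have hWelA : ∀ i : Fin n, (Fintype.card (T i) : ℝ) * ∑ t : ∀ j, T j, ∑ o, x t o * v i (t i) o
        = ∑ s, Stmt18Proof.GG v x i s s := by
      intro i
      have h := Stmt18Proof.sum_update_pi i (fun t => ∑ o, x t o * v i (t i) o)
      simp only [Function.update_self] at h
      rw [← h]
      refine Finset.sum_congr rfl ?_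
      intro s _
      unfold Stmt18Proof.GG
      simp_rw [Finset.sum_mul]
      exact Finset.sum_comm
    have hWelB : ∀ i : Fin n, (Fintype.card (T i) : ℝ) * ∑ t : ∀ j, T j, ∑ o, x' t o * v i (t i) o
        = ∑ s, Stmt18Proof.GG v x i s (π i s) := by
      intro i
      have h := Stmt18Proof.sum_update_pi i (fun t => ∑ o, x' t o * v i (t i) o)
      simp only [Function.update_self] at h
      rw [← h]
      refine Finset.sum_congr rfl ?_
      intro s _
      rw [← hGGx' i s s]
      unfold Stmt18Proof.GG
      simp_rw [Finset.sum_mul]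
      exact Finset.sum_comm
    have hWelCompare : Wel f v x ≤ Wel f v x' := by
      rw [hWelTerm x, hWelTerm x']
      refine mul_le_mul_of_nonneg_left ?_ (inv_nonneg.mpr (le_of_lt hNpos))
      refine Finset.sum_le_sum ?_
      intro i _
      have hc := hcpos i
      have hcne : (Fintype.card (T i) : ℝ) ≠ 0 := ne_of_gt hc
      have h1 : (Fintype.card (T i) : ℝ) * ∑ t : ∀ j, T j, ∑ o, x t o * v i (t i) o
          ≤ (Fintype.card (T i) : ℝ) * ∑ t : ∀ j, T j, ∑ o, x' t o * v i (t i) o := by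
        rw [hWelA i, hWelB i]
        exact hQW i
      have h2 := mul_le_mul_of_nonneg_left h1 (inv_nonneg.mpr (le_of_lt hc))
      rwa [← mul_assoc, inv_mul_cancel₀ hcne, one_mul, ← mul_assoc,
        inv_mul_cancel₀ hcne, one_mul] at h2
    -- final arithmetic
    have h1 : (1 - lam) * Rev f p ≤ (1 - lam) * (Rev f p' + (∑ i, (Fintype.card (T i) : ℝ)) * ε) :=
      mul_le_mul_of_nonneg_left hRevCompare (by linarith)
    have h2 : lam * Wel f v x ≤ lam * Wel f v x' :=
      mul_le_mul_of_nonneg_left hWelCompare hlam0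
    have h3 : (1 - lam) * (Rev f p' + (∑ i, (Fintype.card (T i) : ℝ)) * ε)
        = (1 - lam) * Rev f p' + (1 - lam) * (∑ i, (Fintype.card (T i) : ℝ)) * ε := by
      ring
    rw [h3] at h1
    have hmu' := hmu
    linarith
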